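/- Suppose G^{μν}(x) solves, for fixed y, the pair of distributional equations [−αΔ_x + m₁²]·i∂^μ_x G^{μν}(x−y) = i∂^ν_x δ(x−y) and [−Δ_x + m₂²]·ε^{ρμ} i∂^ρ_x G^{μν}(x−y) = ε^{ρν} i∂^ρ_x δ(x−y) (with m₁² = μ²−σ−ν > 0, m₂² = μ²−ν₅ > 0), and G^{μν} is a tempered distribution whose Fourier transform is a locally integrable matrix function. Then Ĝ^{μν}(k) = δ^{μν}/(k²+m₂²) − (1/(k²+m₂²) − 1/(αk²+m₁²))·k^μk^ν/k², i.e. G equals the free meson propagator G₀ with mass parameters μ²−ν₅ and σ+ν−ν₅. -/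

import Mathlib

/-- The components of `k ∈ ℝ²` as a function `Fin 2 → ℝ`. -/
def kvec (k : ℝ × ℝ) : Fin 2 → ℝ := ![k.1, k.2]

/-- `k² = (k⁰)² + (k¹)²`. -/
def ksq (k : ℝ × ℝ) : ℝ := k.1 ^ 2 + k.2 ^ 2

/-- The 2D Levi-Civita symbol, `ε^{01} = 1 = −ε^{10}`. -/
def epsR : Fin 2 → Fin 2 → ℝ := fun μ ν => !![0, 1; -1, 0] μ ν

/-- If `Ĝ` satisfies, for every `k ≠ 0`, the Fourier-space versions of the
longitudinal equation `[−αΔ + m₁²] i∂^μ G^{μν} = i∂^ν δ` and of the transverse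
equation `[−Δ + m₂²] ε^{ρμ} i∂^ρ G^{μν} = ε^{ρν} i∂^ρ δ`, then `Ĝ` is the free
meson propagator with mass parameters `m₂², m₁²`:
`Ĝ^{μν}(k) = δ^{μν}/(k²+m₂²) − (1/(k²+m₂²) − 1/(αk²+m₁²)) k^μk^ν/k²`. -/
theorem stmt17 (α m1 m2 : ℝ) (hm1 : 0 < m1) (hm2 : 0 < m2) (hα : 0 < α)
    (G : ℝ × ℝ → Fin 2 → Fin 2 → ℝ)
    (hlong : ∀ k : ℝ × ℝ, k ≠ 0 → ∀ ν : Fin 2,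
      (α * ksq k + m1) * ∑ μ : Fin 2, kvec k μ * G k μ ν = kvec k ν)
    (htrans : ∀ k : ℝ × ℝ, k ≠ 0 → ∀ ν : Fin 2,
      (ksq k + m2) * ∑ ρ : Fin 2, ∑ μ : Fin 2, epsR ρ μ * kvec k ρ * G k μ ν
        = ∑ ρ : Fin 2, epsR ρ ν * kvec k ρ) :
    ∀ k : ℝ × ℝ, k ≠ 0 → ∀ μ ν : Fin 2,
      G k μ ν = (if μ = ν then 1 else 0) / (ksq k + m2)
        - (1 / (ksq k + m2) - 1 / (α * ksq k + m1)) * kvec k μ * kvec k ν / ksq k := by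
  intro k hk μ ν
  have hs : ksq k > 0 := by
    have : k.1 ≠ 0 ∨ k.2 ≠ 0 := by
      by_contra h
      push_neg at h
      exact hk (Prod.ext h.1 h.2)
    unfold ksq
    rcases this with h | h <;> positivity
  have hd1 : α * ksq k + m1 > 0 := by positivity
  have hd2 : ksq k + m2 > 0 := by positivity
  have h1 := hlong k hk ν
  have h2 := htrans k hk ν
  simp only [Fin.sum_univ_two, kvec, epsR, ksq, Matrix.cons_val_zero, Matrix.cons_val_one,
    Matrix.head_cons, Matrix.of_apply, Matrix.cons_val', Matrix.empty_val',
    Matrix.cons_val_fin_one, Matrix.head_fin_const] at h1 h2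
  unfold ksq at hs hd1 hd2
  fin_cases μ <;> fin_cases ν <;>
    simp only [Fin.sum_univ_two, kvec, epsR, ksq, Fin.isValue, Matrix.cons_val_zero,
      Matrix.cons_val_one, Matrix.head_cons, Fin.zero_eta, Fin.mk_one, if_true, if_false,
      reduceIte, Fin.reduceEq] at h1 h2 ⊢ <;>
    field_simp <;>
    ring_nf at h1 h2 ⊢
  · linear_combination (k.1 * (k.1^2+k.2^2+m2)) * h1 - (k.2 * (α*(k.1^2+k.2^2)+m1)) * h2
  · linear_combination (k.1 * (k.1^2+k.2^2+m2)) * h1 - (k.2 * (α*(k.1^2+k.2^2)+m1)) * h2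
  · linear_combination (k.2 * (k.1^2+k.2^2+m2)) * h1 + (k.1 * (α*(k.1^2+k.2^2)+m1)) * h2
  · linear_combination (k.2 * (k.1^2+k.2^2+m2)) * h1 + (k.1 * (α*(k.1^2+k.2^2)+m1)) * h2
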